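/- Let p ≥ 2 be an even integer and set τ = 13 + p. Consider the τ rational numbers consisting of 9/10, 13/10, 17/10 together with 1 + k/(p+10) for 1 ≤ k ≤ p/2 + 5 and 2 − k/(p+10) for 1 ≤ k ≤ p/2 + 5. Let x̄ be their average (equal to (189 + 15p)/(130 + 10p)). Then the sum of (x − x̄)² over these τ numbers is at most (τ/12)·( (2 − 1/(p+10)) − 9/10 ). -/
import Mathlib

lemma sum_aff_sq (A B : ℚ) : ∀ n : ℕ, ∑ k ∈ Finset.Icc 1 n, (A + B * k) ^ 2
    = n * A ^ 2 + A * B * (n * (n + 1)) + B ^ 2 * (n * (n + 1) * (2 * n + 1)) / 6 := by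
  intro n
  induction n with
  | zero => simp
  | succ n ih =>
    rw [Finset.sum_Icc_succ_top (by omega : 1 ≤ n + 1), ih]
    push_cast
    ring

/-- Generalized Hertling inequality for the Tjurina spectrum of `S^#_{1,p}` (`p` even). -/
theorem stmt_18 (p : ℕ) (hp : 2 ≤ p) (hpe : Even p)
    (τ : ℚ) (hτ : τ = 13 + (p : ℚ))
    (xbar : ℚ) (hxbar : xbar = (189 + 15 * (p : ℚ)) / (130 + 10 * (p : ℚ))) :
    ((9/10 : ℚ) - xbar) ^ 2 + ((13/10 : ℚ) - xbar) ^ 2 + ((17/10 : ℚ) - xbar) ^ 2 +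
      ∑ k ∈ Finset.Icc 1 (p / 2 + 5),
        ((1 + (k : ℚ) / ((p : ℚ) + 10)) - xbar) ^ 2 +
      ∑ k ∈ Finset.Icc 1 (p / 2 + 5),
        ((2 - (k : ℚ) / ((p : ℚ) + 10)) - xbar) ^ 2
    ≤ (τ / 12) * ((2 - 1 / ((p : ℚ) + 10)) - 9/10) := by
  obtain ⟨m, hm⟩ := hpe
  have hm1 : 1 ≤ m := by omega
  have hpm : p = 2 * m := by omega
  subst hpm
  have hdiv : 2 * m / 2 = m := by omega
  rw [hdiv]
  have h1 : ∑ k ∈ Finset.Icc 1 (m + 5),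
      ((1 + (k : ℚ) / (((2*m : ℕ) : ℚ) + 10)) - xbar) ^ 2
      = ∑ k ∈ Finset.Icc 1 (m + 5),
      ((1 - xbar) + (1 / (((2*m : ℕ) : ℚ) + 10)) * k) ^ 2 := by
    apply Finset.sum_congr rfl; intro k _; ring
  have h2 : ∑ k ∈ Finset.Icc 1 (m + 5),
      ((2 - (k : ℚ) / (((2*m : ℕ) : ℚ) + 10)) - xbar) ^ 2
      = ∑ k ∈ Finset.Icc 1 (m + 5),
      ((2 - xbar) + (-(1 / (((2*m : ℕ) : ℚ) + 10))) * k) ^ 2 := by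
    apply Finset.sum_congr rfl; intro k _; ring
  rw [h1, h2, sum_aff_sq, sum_aff_sq, hτ, hxbar]
  have hq : ((2*m : ℕ) : ℚ) = 2 * (m:ℚ) := by push_cast; ring
  rw [hq]
  push_cast
  have key : (9 / 10 - (189 + 15 * (2 * (m:ℚ))) / (130 + 10 * (2 * (m:ℚ)))) ^ 2 +
            (13 / 10 - (189 + 15 * (2 * (m:ℚ))) / (130 + 10 * (2 * (m:ℚ)))) ^ 2 +
          (17 / 10 - (189 + 15 * (2 * (m:ℚ))) / (130 + 10 * (2 * (m:ℚ)))) ^ 2 +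
        (((m:ℚ) + 5) * (1 - (189 + 15 * (2 * (m:ℚ))) / (130 + 10 * (2 * (m:ℚ)))) ^ 2 +
            (1 - (189 + 15 * (2 * (m:ℚ))) / (130 + 10 * (2 * (m:ℚ)))) * (1 / (2 * (m:ℚ) + 10)) * (((m:ℚ) + 5) * ((m:ℚ) + 5 + 1)) +
          (1 / (2 * (m:ℚ) + 10)) ^ 2 * (((m:ℚ) + 5) * ((m:ℚ) + 5 + 1) * (2 * ((m:ℚ) + 5) + 1)) / 6) +
      (((m:ℚ) + 5) * (2 - (189 + 15 * (2 * (m:ℚ))) / (130 + 10 * (2 * (m:ℚ)))) ^ 2 +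
          (2 - (189 + 15 * (2 * (m:ℚ))) / (130 + 10 * (2 * (m:ℚ)))) * -(1 / (2 * (m:ℚ) + 10)) * (((m:ℚ) + 5) * ((m:ℚ) + 5 + 1)) +
        (-(1 / (2 * (m:ℚ) + 10))) ^ 2 * (((m:ℚ) + 5) * ((m:ℚ) + 5 + 1) * (2 * ((m:ℚ) + 5) + 1)) / 6)
      = (13 + 2 * (m:ℚ)) / 12 * (2 - 1 / (2 * (m:ℚ) + 10) - 9 / 10)
        - (40 * (m:ℚ)^4 + 924 * (m:ℚ)^3 + 7894 * (m:ℚ)^2 + 28797 * (m:ℚ) + 36010)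
          / (600 * ((m:ℚ) + 5) * (13 + 2 * (m:ℚ)) ^ 2) := by
    have h5 : ((m:ℚ) + 5) ≠ 0 := by positivity
    have h13 : (13 + 2 * (m:ℚ)) ≠ 0 := by positivity
    have hA : (2 * (m:ℚ) + 10) ≠ 0 := by positivity
    have hB : (130 + 10 * (2 * (m:ℚ))) ≠ 0 := by positivity
    field_simp
    ring
  rw [key]
  have hpos : (0:ℚ) ≤ (40 * (m:ℚ)^4 + 924 * (m:ℚ)^3 + 7894 * (m:ℚ)^2 + 28797 * (m:ℚ) + 36010)
      / (600 * ((m:ℚ) + 5) * (13 + 2 * (m:ℚ)) ^ 2) := by positivity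
  linarith
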